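/- arXiv:2306.03683 — 3 statements merged into one kernel-verified Lean document; each statement's English description precedes it below -/
import Mathlib

section
/- Let Λ, ε, γ, T be positive real numbers. Suppose λ : ℝ → ℝ is differentiable at every point of [0, T], satisfies λ(t) > 0 for all t ∈ [0, T], and obeys the differential inequality λ'(t) ≥ −2Λε·e^{−γt}·λ(t) − 2Λε·e^{−γt}·√(λ(t)) − 2ε²·e^{−2γt}·λ(t) for all t ∈ [0, T]. Then for every t ∈ [0, T] one has √(λ(t)) ≥ e^{−(2Λε+ε²)/(2γ)}·√(λ(0)) − Λε/γ. -/
/-- Analytic core of the first-eigenvalue estimate (Lemma 3.2, inequality (83)):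
if `lam` is positive, differentiable on `[0, T]`, and satisfies the differential
inequality
`lam' t ≥ -2Λε e^{-γt} lam t - 2Λε e^{-γt} √(lam t) - 2ε² e^{-2γt} lam t`,
then `√(lam t) ≥ e^{-(2Λε+ε²)/(2γ)} √(lam 0) - Λε/γ` on `[0, T]`. -/
theorem stmt_0 (Λ ε γ T : ℝ) (hΛ : 0 < Λ) (hε : 0 < ε) (hγ : 0 < γ) (hT : 0 < T)
    (lam : ℝ → ℝ)
    (hdiff : ∀ t ∈ Set.Icc (0 : ℝ) T, DifferentiableAt ℝ lam t)
    (hpos : ∀ t ∈ Set.Icc (0 : ℝ) T, 0 < lam t)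
    (hineq : ∀ t ∈ Set.Icc (0 : ℝ) T,
      deriv lam t ≥
        -(2 * Λ * ε * Real.exp (-γ * t)) * lam t
          - 2 * Λ * ε * Real.exp (-γ * t) * Real.sqrt (lam t)
          - 2 * ε ^ 2 * Real.exp (-2 * γ * t) * lam t) :
    ∀ t ∈ Set.Icc (0 : ℝ) T,
      Real.sqrt (lam t) ≥
        Real.exp (-(2 * Λ * ε + ε ^ 2) / (2 * γ)) * Real.sqrt (lam 0) - Λ * ε / γ := by
  have hγ' : γ ≠ 0 := ne_of_gt hγ
  set A : ℝ → ℝ := fun s => Λ * ε / γ * (1 - Real.exp (-γ * s))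
      + ε ^ 2 / (2 * γ) * (1 - Real.exp (-2 * γ * s)) with hAdef
  set σ : ℝ → ℝ := fun s => (1 - Real.exp (-γ * s)) / γ with hσdef
  set q : ℝ → ℝ := fun s => Real.exp (A s) * (Real.sqrt (lam s) + Λ * ε * σ s) with hqdef
  -- derivative of A
  have hE1 : ∀ s : ℝ, HasDerivAt (fun x => Real.exp (-γ * x)) (Real.exp (-γ * s) * (-γ)) s := by
    intro s
    have hlin : HasDerivAt (fun x : ℝ => -γ * x) (-γ) s := by
      simpa using (hasDerivAt_id s).const_mul (-γ)
    exact hlin.exp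
  have hE2 : ∀ s : ℝ, HasDerivAt (fun x => Real.exp (-2 * γ * x))
      (Real.exp (-2 * γ * s) * (-2 * γ)) s := by
    intro s
    have hlin : HasDerivAt (fun x : ℝ => -2 * γ * x) (-2 * γ) s := by
      simpa using (hasDerivAt_id s).const_mul (-2 * γ)
    exact hlin.exp
  have hA' : ∀ s : ℝ, HasDerivAt A
      (Λ * ε * Real.exp (-γ * s) + ε ^ 2 * Real.exp (-2 * γ * s)) s := by
    intro s
    have h1 := ((hE1 s).const_sub 1).const_mul (Λ * ε / γ)
    have h2 := ((hE2 s).const_sub 1).const_mul (ε ^ 2 / (2 * γ))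
    have := h1.add h2
    refine this.congr_deriv ?_
    field_simp
  have hσ' : ∀ s : ℝ, HasDerivAt σ (Real.exp (-γ * s)) s := by
    intro s
    have := ((hE1 s).const_sub 1).div_const γ
    refine this.congr_deriv ?_
    field_simp
  have hu : ∀ s ∈ Set.Icc (0 : ℝ) T,
      HasDerivAt (fun x => Real.sqrt (lam x)) (deriv lam s / (2 * Real.sqrt (lam s))) s := by
    intro s hs
    exact ((hdiff s hs).hasDerivAt).sqrt (ne_of_gt (hpos s hs))
  have hq' : ∀ s ∈ Set.Icc (0 : ℝ) T,
      HasDerivAt q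
        (Real.exp (A s) * (Λ * ε * Real.exp (-γ * s) + ε ^ 2 * Real.exp (-2 * γ * s))
            * (Real.sqrt (lam s) + Λ * ε * σ s)
          + Real.exp (A s) * (deriv lam s / (2 * Real.sqrt (lam s))
              + Λ * ε * Real.exp (-γ * s))) s := by
    intro s hs
    exact ((hA' s).exp).mul ((hu s hs).add ((hσ' s).const_mul (Λ * ε)))
  -- q is monotone on [0,T]
  have hmono : MonotoneOn q (Set.Icc 0 T) := by
    apply monotoneOn_of_deriv_nonneg (convex_Icc 0 T)
    · exact fun s hs => ((hq' s hs).differentiableAt).continuousAt.continuousWithinAt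
    · intro s hs
      rw [interior_Icc] at hs
      exact ((hq' s (Set.Ioo_subset_Icc_self hs)).differentiableAt).differentiableWithinAt
    · intro s hs
      rw [interior_Icc] at hs
      have hs' : s ∈ Set.Icc (0 : ℝ) T := Set.Ioo_subset_Icc_self hs
      rw [(hq' s hs').deriv]
      set u := Real.sqrt (lam s) with hudef
      have hu0 : 0 < u := Real.sqrt_pos.mpr (hpos s hs')
      have hu2 : u ^ 2 = lam s := Real.sq_sqrt (hpos s hs').le
      set E1 := Real.exp (-γ * s) with hE1def
      set E2 := Real.exp (-2 * γ * s) with hE2def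
      have hE1pos : 0 < E1 := Real.exp_pos _
      have hE2pos : 0 < E2 := Real.exp_pos _
      have hE1le : E1 ≤ 1 := Real.exp_le_one_iff.mpr (by nlinarith [hs.1])
      have hσnn : 0 ≤ σ s := by
        rw [hσdef]
        exact div_nonneg (by linarith) hγ.le
      have hkey : deriv lam s / (2 * u) ≥ -(Λ * ε * E1 + ε ^ 2 * E2) * u - Λ * ε * E1 := by
        have h1 := hineq s hs'
        have h2 : (-(2 * Λ * ε * E1) * lam s - 2 * Λ * ε * E1 * u - 2 * ε ^ 2 * E2 * lam s)
            / (2 * u) ≤ deriv lam s / (2 * u) :=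
          by gcongr
        calc -(Λ * ε * E1 + ε ^ 2 * E2) * u - Λ * ε * E1
            = (-(2 * Λ * ε * E1) * lam s - 2 * Λ * ε * E1 * u - 2 * ε ^ 2 * E2 * lam s)
              / (2 * u) := by
              rw [← hu2]; field_simp; ring
          _ ≤ deriv lam s / (2 * u) := h2
      have hexp : 0 < Real.exp (A s) := Real.exp_pos _
      have h3 : -(Λ * ε * E1 + ε ^ 2 * E2) * u ≤ deriv lam s / (2 * u) + Λ * ε * E1 := by
        linarith
      have h4 := mul_le_mul_of_nonneg_left h3 hexp.le
      have h5 : 0 ≤ Real.exp (A s) * (Λ * ε * E1 + ε ^ 2 * E2) * (Λ * ε * σ s) := by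
        apply mul_nonneg (mul_nonneg hexp.le (by positivity))
        exact mul_nonneg (by positivity) hσnn
      nlinarith [h4, h5]
  -- conclude
  intro t ht
  have h0 : (0 : ℝ) ∈ Set.Icc (0 : ℝ) T := ⟨le_refl 0, hT.le⟩
  have hq0 : q 0 = Real.sqrt (lam 0) := by
    simp [hqdef, hAdef, hσdef]
  have hqt := hmono h0 ht ht.1
  rw [hq0] at hqt
  -- bounds
  set E1 := Real.exp (-γ * t) with hE1def
  set E2 := Real.exp (-2 * γ * t) with hE2def
  have hE1pos : 0 < E1 := Real.exp_pos _
  have hE2pos : 0 < E2 := Real.exp_pos _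
  have hE1le : E1 ≤ 1 := Real.exp_le_one_iff.mpr (by nlinarith [ht.1])
  have hE2le : E2 ≤ 1 := Real.exp_le_one_iff.mpr (by nlinarith [ht.1])
  have hAle : A t ≤ (2 * Λ * ε + ε ^ 2) / (2 * γ) := by
    rw [hAdef]
    simp only
    have h1 : Λ * ε / γ * (1 - E1) ≤ Λ * ε / γ := by
      have : 0 < Λ * ε / γ := by positivity
      nlinarith
    have h2 : ε ^ 2 / (2 * γ) * (1 - E2) ≤ ε ^ 2 / (2 * γ) := by
      have : 0 < ε ^ 2 / (2 * γ) := by positivity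
      nlinarith
    have : Λ * ε / γ + ε ^ 2 / (2 * γ) = (2 * Λ * ε + ε ^ 2) / (2 * γ) := by
      field_simp
    linarith
  have hσnn : 0 ≤ σ t := by
    rw [hσdef]
    exact div_nonneg (by linarith) hγ.le
  have hσle : σ t ≤ 1 / γ := by
    rw [hσdef]
    simp only
    gcongr
    · linarith
  have h5 : Real.exp (-(A t)) * Real.sqrt (lam 0) ≤ Real.sqrt (lam t) + Λ * ε * σ t := by
    have h := mul_le_mul_of_nonneg_left hqt (Real.exp_pos (-(A t))).le
    rw [← mul_assoc, ← Real.exp_add] at h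
    simpa using h
  have h6 : Real.exp (-(2 * Λ * ε + ε ^ 2) / (2 * γ)) ≤ Real.exp (-(A t)) := by
    rw [neg_div]
    exact Real.exp_le_exp.mpr (by linarith)
  have h7 := mul_le_mul_of_nonneg_right h6 (Real.sqrt_nonneg (lam 0))
  have h8 : Λ * ε * σ t ≤ Λ * ε / γ := by
    have := mul_le_mul_of_nonneg_left hσle (mul_nonneg hΛ.le hε.le)
    calc Λ * ε * σ t ≤ Λ * ε * (1 / γ) := this
      _ = Λ * ε / γ := by ring
  linarith
end

section
/- Let Λ, ε, γ, T be positive real numbers. Suppose μ : ℝ → ℝ is differentiable at every point of [0, T], satisfies μ(t) ≥ 0 for all t ∈ [0, T], and obeys the linear differential inequality μ'(t) ≥ −(Λε·e^{−γt} + ε²·e^{−2γt})·μ(t) − Λε·e^{−γt} for all t ∈ [0, T]. Then for every t ∈ [0, T] one has μ(t) ≥ e^{−(2Λε+ε²)/(2γ)}·μ(0) − Λε/γ. -/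
/-- Comparison step in the proof of Lemma 3.2: if `μ ≥ 0` is differentiable on
`[0, T]` and satisfies the linear differential inequality
`μ' t ≥ -(Λε e^{-γt} + ε² e^{-2γt}) μ t - Λε e^{-γt}`,
then `μ t ≥ e^{-(2Λε+ε²)/(2γ)} μ 0 - Λε/γ` on `[0, T]`. -/
theorem stmt_1 (Λ ε γ T : ℝ) (hΛ : 0 < Λ) (hε : 0 < ε) (hγ : 0 < γ) (hT : 0 < T)
    (μ : ℝ → ℝ)
    (hdiff : ∀ t ∈ Set.Icc (0 : ℝ) T, DifferentiableAt ℝ μ t)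
    (hnonneg : ∀ t ∈ Set.Icc (0 : ℝ) T, 0 ≤ μ t)
    (hineq : ∀ t ∈ Set.Icc (0 : ℝ) T,
      deriv μ t ≥
        -(Λ * ε * Real.exp (-γ * t) + ε ^ 2 * Real.exp (-2 * γ * t)) * μ t
          - Λ * ε * Real.exp (-γ * t)) :
    ∀ t ∈ Set.Icc (0 : ℝ) T,
      μ t ≥ Real.exp (-(2 * Λ * ε + ε ^ 2) / (2 * γ)) * μ 0 - Λ * ε / γ := by
  have hγ' : γ ≠ 0 := ne_of_gt hγ
  set A : ℝ → ℝ := fun s =>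
    Λ * ε / γ * (1 - Real.exp (-γ * s)) + ε ^ 2 / (2 * γ) * (1 - Real.exp (-2 * γ * s))
    with hAdef
  have hAderiv : ∀ s : ℝ,
      HasDerivAt A (Λ * ε * Real.exp (-γ * s) + ε ^ 2 * Real.exp (-2 * γ * s)) s := by
    intro s
    have h1 : HasDerivAt (fun x : ℝ => Real.exp (-γ * x)) (Real.exp (-γ * s) * (-γ)) s :=
      by simpa using ((hasDerivAt_id s).const_mul (-γ)).exp
    have h2 : HasDerivAt (fun x : ℝ => Real.exp (-2 * γ * x))
        (Real.exp (-2 * γ * s) * (-2 * γ)) s :=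
      by simpa using ((hasDerivAt_id s).const_mul (-2 * γ)).exp
    have := (((hasDerivAt_const s (1:ℝ)).sub h1).const_mul (Λ * ε / γ)).add
      (((hasDerivAt_const s (1:ℝ)).sub h2).const_mul (ε ^ 2 / (2 * γ)))
    refine HasDerivAt.congr_deriv this ?_
    field_simp
    ring
  set g : ℝ → ℝ := fun s =>
    Real.exp (A s) * (μ s + Λ * ε / γ * (1 - Real.exp (-γ * s))) with hgdef
  set g' : ℝ → ℝ := fun s =>
    Real.exp (A s) * (Λ * ε * Real.exp (-γ * s) + ε ^ 2 * Real.exp (-2 * γ * s)) *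
      (μ s + Λ * ε / γ * (1 - Real.exp (-γ * s))) +
    Real.exp (A s) * (deriv μ s + Λ * ε / γ * (-(Real.exp (-γ * s) * (-γ))))
    with hg'def
  have hgderiv : ∀ s ∈ Set.Icc (0:ℝ) T, HasDerivAt g (g' s) s := by
    intro s hs
    have h1 : HasDerivAt (fun x : ℝ => Real.exp (-γ * x)) (Real.exp (-γ * s) * (-γ)) s :=
      by simpa using ((hasDerivAt_id s).const_mul (-γ)).exp
    have hexpA : HasDerivAt (fun x => Real.exp (A x))
        (Real.exp (A s) * (Λ * ε * Real.exp (-γ * s) + ε ^ 2 * Real.exp (-2 * γ * s))) s :=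
      (hAderiv s).exp
    have hinner : HasDerivAt (fun x => μ x + Λ * ε / γ * (1 - Real.exp (-γ * x)))
        (deriv μ s + Λ * ε / γ * (-(Real.exp (-γ * s) * (-γ)))) s := by
      have hm := (hdiff s hs).hasDerivAt
      have := ((hasDerivAt_const s (1:ℝ)).sub h1).const_mul (Λ * ε / γ)
      exact (hm.add this).congr_deriv (by ring)
    exact hexpA.mul hinner
  have hTnn : (0:ℝ) ≤ T := le_of_lt hT
  have key : ∀ s ∈ Set.Icc (0:ℝ) T, 0 ≤ g' s := by
    intro s hs
    obtain ⟨hs0, hsT⟩ := hs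
    have he1 : Real.exp (-γ * s) ≤ 1 := by
      apply Real.exp_le_one_iff.mpr
      nlinarith
    have hepos : (0:ℝ) < Real.exp (-γ * s) := Real.exp_pos _
    have he2pos : (0:ℝ) < Real.exp (-2 * γ * s) := Real.exp_pos _
    have heA : (0:ℝ) < Real.exp (A s) := Real.exp_pos _
    have hmum := hnonneg s ⟨hs0, hsT⟩
    have hder := hineq s ⟨hs0, hsT⟩
    have h1 : 0 ≤ Λ * ε / γ * (1 - Real.exp (-γ * s)) := by
      apply mul_nonneg (by positivity) (by linarith)
    have h2 : deriv μ s + (Λ * ε * Real.exp (-γ * s) + ε ^ 2 * Real.exp (-2 * γ * s)) * μ s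
        + Λ * ε * Real.exp (-γ * s) ≥ 0 := by linarith
    have expand : g' s = Real.exp (A s) *
        ((Λ * ε * Real.exp (-γ * s) + ε ^ 2 * Real.exp (-2 * γ * s)) *
          (Λ * ε / γ * (1 - Real.exp (-γ * s)))
        + (deriv μ s + (Λ * ε * Real.exp (-γ * s) + ε ^ 2 * Real.exp (-2 * γ * s)) * μ s
            + Λ * ε * Real.exp (-γ * s))) := by
      simp only [hg'def]
      field_simp
      ring
    rw [expand]
    apply mul_nonneg (le_of_lt heA)
    have h3 : 0 ≤ (Λ * ε * Real.exp (-γ * s) + ε ^ 2 * Real.exp (-2 * γ * s)) *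
        (Λ * ε / γ * (1 - Real.exp (-γ * s))) := by
      apply mul_nonneg (by positivity) h1
    linarith
  have hmono : MonotoneOn g (Set.Icc 0 T) := by
    apply monotoneOn_of_deriv_nonneg (convex_Icc 0 T)
    · intro s hs
      exact ((hgderiv s hs).continuousAt).continuousWithinAt
    · intro s hs
      rw [interior_Icc] at hs
      exact ((hgderiv s (Set.mem_Icc_of_Ioo hs)).differentiableAt).differentiableWithinAt
    · intro s hs
      rw [interior_Icc] at hs
      rw [(hgderiv s (Set.mem_Icc_of_Ioo hs)).deriv]
      exact key s (Set.mem_Icc_of_Ioo hs)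
  intro t ht
  obtain ⟨ht0, htT⟩ := ht
  have h0mem : (0:ℝ) ∈ Set.Icc (0:ℝ) T := ⟨le_refl _, hTnn⟩
  have hg0 : g 0 = μ 0 := by
    simp [hgdef, hAdef]
  have hgle : μ 0 ≤ g t := by
    rw [← hg0]; exact hmono h0mem ⟨ht0, htT⟩ ht0
  -- unpack g t
  have heA : (0:ℝ) < Real.exp (A t) := Real.exp_pos _
  have he1 : Real.exp (-γ * t) ≤ 1 := Real.exp_le_one_iff.mpr (by nlinarith)
  have he1pos : (0:ℝ) < Real.exp (-γ * t) := Real.exp_pos _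
  have he2 : Real.exp (-2 * γ * t) ≤ 1 := Real.exp_le_one_iff.mpr (by nlinarith)
  have he2pos : (0:ℝ) < Real.exp (-2 * γ * t) := Real.exp_pos _
  have hC : A t ≤ (2 * Λ * ε + ε ^ 2) / (2 * γ) := by
    have h1 : Λ * ε / γ * (1 - Real.exp (-γ * t)) ≤ Λ * ε / γ := by
      have : 1 - Real.exp (-γ * t) ≤ 1 := by linarith
      nlinarith [div_pos (mul_pos hΛ hε) hγ]
    have h2 : ε ^ 2 / (2 * γ) * (1 - Real.exp (-2 * γ * t)) ≤ ε ^ 2 / (2 * γ) := by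
      have : 1 - Real.exp (-2 * γ * t) ≤ 1 := by linarith
      nlinarith [div_pos (pow_pos hε 2) (by linarith : (0:ℝ) < 2 * γ)]
    have : A t ≤ Λ * ε / γ + ε ^ 2 / (2 * γ) := by
      simp only [hAdef]; linarith
    calc A t ≤ Λ * ε / γ + ε ^ 2 / (2 * γ) := this
      _ = (2 * Λ * ε + ε ^ 2) / (2 * γ) := by field_simp
  have hexpA : Real.exp (-(2 * Λ * ε + ε ^ 2) / (2 * γ)) ≤ Real.exp (-A t) := by
    apply Real.exp_le_exp.mpr
    rw [neg_div]
    linarith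
  have hμ0 : 0 ≤ μ 0 := hnonneg 0 h0mem
  -- from hgle : μ 0 ≤ exp (A t) * (μ t + d)
  have hd : Λ * ε / γ * (1 - Real.exp (-γ * t)) ≤ Λ * ε / γ := by
    nlinarith [div_pos (mul_pos hΛ hε) hγ]
  have step : Real.exp (-A t) * μ 0 ≤ μ t + Λ * ε / γ * (1 - Real.exp (-γ * t)) := by
    have := hgle
    rw [hgdef] at this
    have h := mul_le_mul_of_nonneg_left this (le_of_lt (Real.exp_pos (-A t)))
    calc Real.exp (-A t) * μ 0 ≤ Real.exp (-A t) *
          (Real.exp (A t) * (μ t + Λ * ε / γ * (1 - Real.exp (-γ * t)))) := h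
      _ = μ t + Λ * ε / γ * (1 - Real.exp (-γ * t)) := by
          rw [← mul_assoc, ← Real.exp_add]; simp
  have hlow : Real.exp (-(2 * Λ * ε + ε ^ 2) / (2 * γ)) * μ 0 ≤ Real.exp (-A t) * μ 0 :=
    mul_le_mul_of_nonneg_right hexpA hμ0
  have : Real.exp (-(2 * Λ * ε + ε ^ 2) / (2 * γ)) * μ 0 ≤ μ t + Λ * ε / γ := by
    linarith
  linarith
end

section
/- Let Λ, ε, γ, T be positive real numbers. Suppose μ : ℝ → ℝ is differentiable at every point of [0, T], satisfies μ(t) ≥ 0 for all t ∈ [0, T], and obeys μ'(t) ≥ −(Λε·e^{−γt} + ε²·e^{−2γt})·μ(t) − Λε·e^{−γt} for all t ∈ [0, T]. Then for every t ∈ [0, T] one has the integrated inequality e^{−(1/(2γ))(2Λε·e^{−γt} + ε²·e^{−2γt})}·μ(t) ≥ e^{−(1/(2γ))(2Λε + ε²)}·μ(0) + (Λε/γ)·∫₁^{e^{−γt}} e^{−(1/(2γ))(2Λε·u + ε²·u²)} du, where the integral is the (signed) integral of the real function u ↦ e^{−(1/(2γ))(2Λε·u + ε²·u²)} from 1 to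 e^{−γt}. -/
/-- Sharp integrated inequality from the proof of Lemma 3.2: under the same
differential inequality as in the comparison step, one has
`e^{-(1/(2γ))(2Λε e^{-γt} + ε² e^{-2γt})} μ t
  ≥ e^{-(1/(2γ))(2Λε + ε²)} μ 0 + (Λε/γ) ∫₁^{e^{-γt}} e^{-(1/(2γ))(2Λε u + ε² u²)} du`. -/
theorem stmt_2 (Λ ε γ T : ℝ) (hΛ : 0 < Λ) (hε : 0 < ε) (hγ : 0 < γ) (hT : 0 < T)
    (μ : ℝ → ℝ)
    (hdiff : ∀ t ∈ Set.Icc (0 : ℝ) T, DifferentiableAt ℝ μ t)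
    (hnonneg : ∀ t ∈ Set.Icc (0 : ℝ) T, 0 ≤ μ t)
    (hineq : ∀ t ∈ Set.Icc (0 : ℝ) T,
      deriv μ t ≥
        -(Λ * ε * Real.exp (-γ * t) + ε ^ 2 * Real.exp (-2 * γ * t)) * μ t
          - Λ * ε * Real.exp (-γ * t)) :
    ∀ t ∈ Set.Icc (0 : ℝ) T,
      Real.exp (-(1 / (2 * γ)) * (2 * Λ * ε * Real.exp (-γ * t)
          + ε ^ 2 * Real.exp (-2 * γ * t))) * μ t ≥
        Real.exp (-(1 / (2 * γ)) * (2 * Λ * ε + ε ^ 2)) * μ 0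
          + (Λ * ε / γ) * ∫ u in (1 : ℝ)..(Real.exp (-γ * t)),
              Real.exp (-(1 / (2 * γ)) * (2 * Λ * ε * u + ε ^ 2 * u ^ 2)) := by
  intro t ht
  have hγ0 : γ ≠ 0 := ne_of_gt hγ
  set g : ℝ → ℝ :=
    fun u => Real.exp (-(1 / (2 * γ)) * (2 * Λ * ε * u + ε ^ 2 * u ^ 2)) with hgdef
  have hgc : Continuous g := by
    apply Real.continuous_exp.comp
    continuity
  set E : ℝ → ℝ := fun s => Real.exp (-γ * s) with hEdef
  have hEd : ∀ s, HasDerivAt E (-γ * E s) s := by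
    intro s
    have h1 : HasDerivAt (fun s : ℝ => -γ * s) (-γ) s := by
      simpa using (hasDerivAt_id s).const_mul (-γ)
    simpa [hEdef, mul_comm] using h1.exp
  have hE2 : ∀ s : ℝ, Real.exp (-2 * γ * s) = E s ^ 2 := by
    intro s
    rw [hEdef, sq, ← Real.exp_add]
    ring_nf
  set H : ℝ → ℝ := fun x => ∫ u in (1:ℝ)..x, g u with hHdef
  have hHd : ∀ x, HasDerivAt H (g x) x := by
    intro x
    exact intervalIntegral.integral_hasDerivAt_right
      (hgc.intervalIntegrable 1 x)
      (hgc.stronglyMeasurableAtFilter _ _)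
      hgc.continuousAt
  set φ : ℝ → ℝ :=
    fun s => -(1 / (2 * γ)) * (2 * Λ * ε * E s + ε ^ 2 * E s ^ 2) with hφdef
  have hφd : ∀ s, HasDerivAt φ (Λ * ε * E s + ε ^ 2 * E s ^ 2) s := by
    intro s
    have h1 : HasDerivAt (fun s => 2 * Λ * ε * E s + ε ^ 2 * E s ^ 2)
        (2 * Λ * ε * (-γ * E s) + ε ^ 2 * (2 * E s ^ 1 * (-γ * E s))) s :=
      ((hEd s).const_mul (2 * Λ * ε)).add (((hEd s).pow 2).const_mul (ε ^ 2))
    have h2 := h1.const_mul (-(1 / (2 * γ)))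
    refine h2.congr_deriv ?_
    field_simp
    ring
  have hgφ : ∀ s, g (E s) = Real.exp (φ s) := by intro s; rfl
  set F : ℝ → ℝ :=
    fun s => Real.exp (φ s) * μ s - (Λ * ε / γ) * H (E s) with hFdef
  have hFd : ∀ s ∈ Set.Icc (0:ℝ) T, HasDerivAt F
      ((Real.exp (φ s) * (Λ * ε * E s + ε ^ 2 * E s ^ 2)) * μ s
        + Real.exp (φ s) * deriv μ s
        - (Λ * ε / γ) * (g (E s) * (-γ * E s))) s := by
    intro s hs
    have hμd : HasDerivAt μ (deriv μ s) s := (hdiff s hs).hasDerivAt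
    exact (((hφd s).exp.mul hμd).sub
      (((hHd (E s)).comp s (hEd s)).const_mul (Λ * ε / γ)))
  have hDnonneg : ∀ s ∈ Set.Icc (0:ℝ) T,
      0 ≤ (Real.exp (φ s) * (Λ * ε * E s + ε ^ 2 * E s ^ 2)) * μ s
        + Real.exp (φ s) * deriv μ s
        - (Λ * ε / γ) * (g (E s) * (-γ * E s)) := by
    intro s hs
    have h1 := hineq s hs
    rw [hE2 s] at h1
    have hEeq : Real.exp (-γ * s) = E s := rfl
    rw [hEeq] at h1
    have hexp : 0 < Real.exp (φ s) := Real.exp_pos _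
    have hbracket : 0 ≤ deriv μ s + (Λ * ε * E s + ε ^ 2 * E s ^ 2) * μ s
        + Λ * ε * E s := by linarith
    have := mul_nonneg hexp.le hbracket
    rw [hgφ s]
    have hc : (Λ * ε / γ) * (Real.exp (φ s) * (-γ * E s))
        = -(Real.exp (φ s) * (Λ * ε * E s)) := by
      field_simp
    rw [hc]
    nlinarith [this]
  have hmono : MonotoneOn F (Set.Icc (0:ℝ) T) := by
    apply monotoneOn_of_deriv_nonneg (convex_Icc 0 T)
    · intro s hs
      exact ((hFd s hs).differentiableAt).continuousAt.continuousWithinAt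
    · intro s hs
      rw [interior_Icc] at hs
      exact ((hFd s (Set.mem_Icc_of_Ioo hs)).differentiableAt).differentiableWithinAt
    · intro s hs
      rw [interior_Icc] at hs
      have hs' := Set.mem_Icc_of_Ioo hs
      rw [(hFd s hs').deriv]
      exact hDnonneg s hs'
  have h0 : (0:ℝ) ∈ Set.Icc (0:ℝ) T := ⟨le_refl _, hT.le⟩
  have key := hmono h0 ht ht.1
  rw [hFdef] at key
  simp only at key
  have hE0 : E 0 = 1 := by simp [hEdef]
  have hH1 : H 1 = 0 := by simp [hHdef]
  rw [hE0, hH1] at key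
  have hφ0 : φ 0 = -(1 / (2 * γ)) * (2 * Λ * ε + ε ^ 2) := by
    simp [hφdef, hE0]
  rw [hφ0] at key
  rw [hE2 t]
  have hEeq : Real.exp (-γ * t) = E t := rfl
  rw [hEeq]
  have : (Λ * ε / γ) * H (E t)
      = (Λ * ε / γ) * ∫ u in (1:ℝ)..E t, g u := rfl
  linarith [key]
end
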